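/- Let M be an antisymmetric 2n × 2n matrix over a commutative ring, and let ω = (1/2)·Σ_{μ,ν=1}^{2n} M_{μν} e_μ ∧ e_ν be the associated 2-form in the exterior algebra on generators e₁, …, e_{2n}. Then the n-th wedge power satisfies ω^{∧n} = n! · pf(M) · e₁ ∧ e₂ ∧ ⋯ ∧ e_{2n}, where pf(M) is the Pfaffian of M. -/

import Mathlib

open Matrix

/-- The set of permutations of `Fin (2n)` encoding perfect matchings in canonical form:
`σ(2j) < σ(2j+1)` for each `j`, and `σ(2j)` increasing in `j` (0-based indexing). -/
def pfMatchings (n : ℕ) : Finset (Equiv.Perm (Fin (2 * n))) :=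
  Finset.univ.filter fun σ =>
    (∀ j : Fin n, σ ⟨2 * (j : ℕ), by have := j.isLt; omega⟩ <
        σ ⟨2 * (j : ℕ) + 1, by have := j.isLt; omega⟩) ∧
    ∀ j k : Fin n, j < k →
      σ ⟨2 * (j : ℕ), by have := j.isLt; omega⟩ <
        σ ⟨2 * (k : ℕ), by have := k.isLt; omega⟩

/-- The Pfaffian of a `2n × 2n` matrix over a commutative ring,
`pf(M) = Σ_{matchings} sgn(π) ∏_j M_{π(2j-1),π(2j)}`
(equivalently `(1/(2ⁿ n!)) Σ_{π ∈ S_{2n}} sgn(π) ∏_j M_{π(2j-1),π(2j)}`). -/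
def pfaffian {R : Type*} [CommRing R] {n : ℕ}
    (M : Matrix (Fin (2 * n)) (Fin (2 * n)) R) : R :=
  ∑ σ ∈ pfMatchings n,
    Equiv.Perm.sign σ •
      ∏ j : Fin n,
        M (σ ⟨2 * (j : ℕ), by have := j.isLt; omega⟩)
          (σ ⟨2 * (j : ℕ) + 1, by have := j.isLt; omega⟩)

namespace PfWedge

variable {n : ℕ}

/-- `2j` as an element of `Fin (2n)`. -/
def i0 (n : ℕ) (j : Fin n) : Fin (2 * n) := ⟨2 * (j : ℕ), by have := j.isLt; omega⟩
/-- `2j+1` as an element of `Fin (2n)`. -/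
def i1 (n : ℕ) (j : Fin n) : Fin (2 * n) := ⟨2 * (j : ℕ) + 1, by have := j.isLt; omega⟩

/-- the equivalence `Fin n × Fin 2 ≃ Fin (2n)`, `(j, r) ↦ 2j + r`. -/
def eqv (n : ℕ) : Fin n × Fin 2 ≃ Fin (2 * n) :=
  finProdFinEquiv.trans (finCongr (Nat.mul_comm n 2))

lemma eqv_apply (j : Fin n) (r : Fin 2) :
    eqv n (j, r) = ⟨2 * (j : ℕ) + (r : ℕ), by have := j.isLt; have := r.isLt; omega⟩ := by
  apply Fin.ext
  simp [eqv, finProdFinEquiv]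
  omega

/-- the block permutation on `Fin (2n)` induced by a permutation of `Fin n`. -/
def bp (τ : Equiv.Perm (Fin n)) : Equiv.Perm (Fin (2 * n)) :=
  (eqv n).permCongr (Equiv.prodCongrLeft fun _ : Fin 2 => τ)

lemma bp_apply (τ : Equiv.Perm (Fin n)) (j : Fin n) (r : Fin 2) :
    bp τ (eqv n (j, r)) = eqv n (τ j, r) := by
  simp [bp, Equiv.permCongr_apply, Equiv.prodCongrLeft_apply]

lemma i0_eq_eqv (j : Fin n) : i0 n j = eqv n (j, 0) := by
  rw [eqv_apply]; exact Fin.ext (by simp [i0])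

lemma i1_eq_eqv (j : Fin n) : i1 n j = eqv n (j, 1) := by
  rw [eqv_apply]; exact Fin.ext (by simp [i1])

lemma bp_i0 (τ : Equiv.Perm (Fin n)) (j : Fin n) : bp τ (i0 n j) = i0 n (τ j) := by
  rw [i0_eq_eqv, bp_apply, i0_eq_eqv]

lemma bp_i1 (τ : Equiv.Perm (Fin n)) (j : Fin n) : bp τ (i1 n j) = i1 n (τ j) := by
  rw [i1_eq_eqv, bp_apply, i1_eq_eqv]

/-- interleaving of a tuple of pairs -/
def interleave (d : Fin n → Fin (2 * n) × Fin (2 * n)) : Fin (2 * n) → Fin (2 * n) :=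
  fun k =>
    if ((eqv n).symm k).2 = 0 then (d ((eqv n).symm k).1).1 else (d ((eqv n).symm k).1).2

lemma interleave_i0 (d : Fin n → Fin (2 * n) × Fin (2 * n)) (j : Fin n) :
    interleave d (i0 n j) = (d j).1 := by
  rw [i0_eq_eqv]; simp [interleave]

lemma interleave_i1 (d : Fin n → Fin (2 * n) × Fin (2 * n)) (j : Fin n) :
    interleave d (i1 n j) = (d j).2 := by
  rw [i1_eq_eqv]; simp [interleave]

lemma sign_bp (τ : Equiv.Perm (Fin n)) : Equiv.Perm.sign (bp τ) = 1 := by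
  rw [bp, Equiv.Perm.sign_permCongr, Equiv.Perm.sign_prodCongrLeft]
  simp [Finset.prod_const]

lemma bp_mul (τ₁ τ₂ : Equiv.Perm (Fin n)) : bp τ₁ * bp τ₂ = bp (τ₁ * τ₂) := by
  ext k
  simp [bp, Equiv.permCongr_apply, Equiv.prodCongrLeft]

lemma bp_one : bp (1 : Equiv.Perm (Fin n)) = 1 := by
  ext k
  simp [bp, Equiv.permCongr_apply, Equiv.prodCongrLeft]


/-- product over pairs -/
lemma prod_ofFn_pairs {A : Type*} [Monoid A] {n : ℕ} (g : Fin (2 * n) → A) :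
    (List.ofFn g).prod =
      (List.ofFn fun i : Fin n => g (i0 n i) * g (i1 n i)).prod := by
  rw [List.ofFn_mul' g, List.prod_flatten, List.map_ofFn]
  congr 1
  congr 1
  funext i
  simp only [Function.comp_apply, List.ofFn_succ, List.ofFn_zero, List.prod_cons,
    List.prod_nil, mul_one]
  congr 1 <;> exact congrArg g (Fin.ext (by simp [i0, i1]))

variable {R : Type*} [CommRing R]

/-- standard basis vectors -/
def eb (R : Type*) [CommRing R] (n : ℕ) : Fin (2 * n) → (Fin (2 * n) → R) :=
  fun μ => Pi.single μ 1

/-- the summand of the 2-form -/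
def tf (n : ℕ) (M : Matrix (Fin (2 * n)) (Fin (2 * n)) R)
    (p : Fin (2 * n) × Fin (2 * n)) : ExteriorAlgebra R (Fin (2 * n) → R) :=
  if p.1 < p.2 then
    M p.1 p.2 • (ExteriorAlgebra.ι R (eb R n p.1) * ExteriorAlgebra.ι R (eb R n p.2))
  else 0

/-- the top form -/
def topE (R : Type*) [CommRing R] (n : ℕ) : ExteriorAlgebra R (Fin (2 * n) → R) :=
  ExteriorAlgebra.ιMulti R (2 * n) (eb R n)

/-- the pfaffian summand -/
def cf (n : ℕ) (M : Matrix (Fin (2 * n)) (Fin (2 * n)) R) (σ : Equiv.Perm (Fin (2 * n))) : R :=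
  ((Equiv.Perm.sign σ : ℤ) : R) * ∏ j : Fin n, M (σ (i0 n j)) (σ (i1 n j))

lemma eval_ordered (M : Matrix (Fin (2 * n)) (Fin (2 * n)) R)
    (d : Fin n → Fin (2 * n) × Fin (2 * n)) (h : ∀ i, (d i).1 < (d i).2) :
    (List.ofFn fun i => tf n M (d i)).prod =
      (∏ i : Fin n, M (d i).1 (d i).2) •
        ExteriorAlgebra.ιMulti R (2 * n) (fun k => eb R n (interleave d k)) := by
  have h1 : (fun i => tf n M (d i)) = fun i =>
      M (d i).1 (d i).2 •
        (ExteriorAlgebra.ι R (eb R n (d i).1) * ExteriorAlgebra.ι R (eb R n (d i).2)) := by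
    funext i; exact if_pos (h i)
  rw [h1, ← MultilinearMap.mkPiAlgebraFin_apply (R := R), MultilinearMap.map_smul_univ,
    MultilinearMap.mkPiAlgebraFin_apply]
  congr 1
  rw [ExteriorAlgebra.ιMulti_apply, prod_ofFn_pairs]
  congr 1
  congr 1
  funext i
  rw [interleave_i0, interleave_i1]

lemma prod_zero_of_not_ordered (M : Matrix (Fin (2 * n)) (Fin (2 * n)) R)
    (d : Fin n → Fin (2 * n) × Fin (2 * n)) (h : ¬ ∀ i, (d i).1 < (d i).2) :
    (List.ofFn fun i => tf n M (d i)).prod = 0 := by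
  push_neg at h
  obtain ⟨i, hi⟩ := h
  refine List.prod_eq_zero ?_
  rw [List.mem_ofFn]
  refine ⟨i, ?_⟩
  show tf n M (d i) = 0
  unfold tf
  rw [if_neg (not_lt.mpr hi)]

lemma prod_zero_of_not_inj (M : Matrix (Fin (2 * n)) (Fin (2 * n)) R)
    (d : Fin n → Fin (2 * n) × Fin (2 * n)) (h1 : ∀ i, (d i).1 < (d i).2)
    (h2 : ¬ Function.Injective (interleave d)) :
    (List.ofFn fun i => tf n M (d i)).prod = 0 := by
  rw [eval_ordered M d h1]
  obtain ⟨a, b, hab, hne⟩ := Function.not_injective_iff.mp h2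
  have hz : ExteriorAlgebra.ιMulti R (2 * n) (fun k => eb R n (interleave d k)) = 0 :=
    (ExteriorAlgebra.ιMulti R (2 * n)).map_eq_zero_of_eq
      (fun k => eb R n (interleave d k)) (i := a) (j := b) (congrArg (eb R n) hab) hne
  rw [hz, smul_zero]

/-- pairs from a permutation -/
def dOf (n : ℕ) (σ : Equiv.Perm (Fin (2 * n))) : Fin n → Fin (2 * n) × Fin (2 * n) :=
  fun j => (σ (i0 n j), σ (i1 n j))

lemma interleave_dOf (σ : Equiv.Perm (Fin (2 * n))) : interleave (dOf n σ) = ⇑σ := by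
  funext k
  obtain ⟨⟨j, r⟩, rfl⟩ : ∃ p, eqv n p = k := ⟨(eqv n).symm k, Equiv.apply_symm_apply _ _⟩
  obtain rfl | rfl : r = 0 ∨ r = 1 := by omega
  · rw [← i0_eq_eqv, interleave_i0]; rfl
  · rw [← i1_eq_eqv, interleave_i1]; rfl

lemma cf_mul_bp (M : Matrix (Fin (2 * n)) (Fin (2 * n)) R) (π : Equiv.Perm (Fin (2 * n)))
    (τ : Equiv.Perm (Fin n)) : cf n M (π * bp τ) = cf n M π := by
  unfold cf
  rw [_root_.map_mul, sign_bp, mul_one]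
  congr 1
  calc ∏ j : Fin n, M ((π * bp τ) (i0 n j)) ((π * bp τ) (i1 n j))
      = ∏ j : Fin n, M (π (i0 n (τ j))) (π (i1 n (τ j))) := by
        refine Finset.prod_congr rfl fun j _ => ?_
        rw [Equiv.Perm.mul_apply, Equiv.Perm.mul_apply, bp_i0, bp_i1]
    _ = ∏ j : Fin n, M (π (i0 n j)) (π (i1 n j)) :=
        Equiv.prod_comp τ (fun j => M (π (i0 n j)) (π (i1 n j)))

lemma i0_injective : Function.Injective (i0 n) := by
  intro a b h
  have := congrArg (fun x : Fin (2 * n) => (x : ℕ)) h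
  simp only [i0] at this
  exact Fin.ext (by omega)

/-- the set of permutations with each pair increasing -/
def Qset (n : ℕ) : Finset (Equiv.Perm (Fin (2 * n))) :=
  Finset.univ.filter fun σ => ∀ j : Fin n, σ (i0 n j) < σ (i1 n j)

lemma sum_to_Q (M : Matrix (Fin (2 * n)) (Fin (2 * n)) R) :
    ∑ d : Fin n → Fin (2 * n) × Fin (2 * n), (List.ofFn fun i => tf n M (d i)).prod
      = ∑ σ ∈ Qset n, cf n M σ • topE R n := by
  classical
  rw [← Finset.sum_filter_of_ne
    (p := fun d : Fin n → Fin (2 * n) × Fin (2 * n) =>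
      (∀ i, (d i).1 < (d i).2) ∧ Function.Injective (interleave d))
    (fun d _ hne => by
      by_contra hc
      rw [not_and_or] at hc
      rcases hc with hc | hc
      · exact hne (prod_zero_of_not_ordered M d hc)
      · rcases Classical.em (∀ i, (d i).1 < (d i).2) with h1 | h1
        · exact hne (prod_zero_of_not_inj M d h1 hc)
        · exact hne (prod_zero_of_not_ordered M d h1))]
  refine Finset.sum_bij'
    (i := fun d hd => Equiv.ofBijective (interleave d)
      (Finite.injective_iff_bijective.mp (Finset.mem_filter.mp hd).2.2))
    (j := fun σ _ => dOf n σ) ?_ ?_ ?_ ?_ ?_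
  · intro d hd
    rw [Qset, Finset.mem_filter]
    refine ⟨Finset.mem_univ _, fun j => ?_⟩
    show interleave d (i0 n j) < interleave d (i1 n j)
    rw [interleave_i0, interleave_i1]
    exact (Finset.mem_filter.mp hd).2.1 j
  · intro σ hσ
    rw [Finset.mem_filter]
    refine ⟨Finset.mem_univ _, fun j => ?_, ?_⟩
    · exact (Finset.mem_filter.mp hσ).2 j
    · rw [interleave_dOf]; exact σ.injective
  · intro d hd
    funext j
    exact Prod.ext (interleave_i0 d j) (interleave_i1 d j)
  · intro σ hσ
    exact Equiv.ext fun k => congrFun (interleave_dOf σ) k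
  · intro d hd
    set σd : Equiv.Perm (Fin (2 * n)) := Equiv.ofBijective (interleave d)
      (Finite.injective_iff_bijective.mp (Finset.mem_filter.mp hd).2.2) with hσd
    have hP : ExteriorAlgebra.ιMulti R (2 * n) (fun k => eb R n (interleave d k))
        = Equiv.Perm.sign σd • topE R n :=
      (ExteriorAlgebra.ιMulti R (2 * n)).map_perm (eb R n) σd
    have hprod : ∏ j : Fin n, M (σd (i0 n j)) (σd (i1 n j)) = ∏ i : Fin n, M (d i).1 (d i).2 :=
      Finset.prod_congr rfl fun j _ => by
        rw [show σd (i0 n j) = (d j).1 from interleave_i0 d j,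
          show σd (i1 n j) = (d j).2 from interleave_i1 d j]
    rw [eval_ordered M d (Finset.mem_filter.mp hd).2.1, hP, ← hprod, Units.smul_def, smul_comm]
    simp only [cf]
    rw [mul_smul, Int.cast_smul_eq_zsmul, hσd]
end PfWedge

namespace PfWedge

variable {n : ℕ} {R : Type*} [CommRing R]

lemma mem_pfM_iff (π : Equiv.Perm (Fin (2 * n))) :
    π ∈ pfMatchings n ↔ (∀ j : Fin n, π (i0 n j) < π (i1 n j)) ∧
      (∀ j k : Fin n, j < k → π (i0 n j) < π (i0 n k)) := by
  unfold pfMatchings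
  rw [Finset.mem_filter]
  simp only [Finset.mem_univ, true_and]
  exact Iff.rfl

lemma pfaffian_eq (M : Matrix (Fin (2 * n)) (Fin (2 * n)) R) :
    pfaffian M = ∑ π ∈ pfMatchings n, cf n M π := by
  unfold pfaffian cf
  refine Finset.sum_congr rfl fun π _ => ?_
  rw [Units.smul_def, zsmul_eq_mul]
  rfl

lemma sum_Q_val (M : Matrix (Fin (2 * n)) (Fin (2 * n)) R) :
    ∑ σ ∈ Qset n, cf n M σ • topE R n = ((n.factorial : R) * pfaffian M) • topE R n := by
  classical
  have hbij : ∑ x ∈ (pfMatchings n) ×ˢ (Finset.univ : Finset (Equiv.Perm (Fin n))),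
      cf n M (x.1 * bp x.2) • topE R n = ∑ σ ∈ Qset n, cf n M σ • topE R n := by
    refine Finset.sum_nbij (i := fun x => x.1 * bp x.2) ?_ ?_ ?_ ?_
    · intro x hx
      obtain ⟨hx1, -⟩ := Finset.mem_product.mp hx
      rw [Qset, Finset.mem_filter]
      refine ⟨Finset.mem_univ _, fun j => ?_⟩
      have h1 := ((mem_pfM_iff x.1).mp hx1).1 (x.2 j)
      show x.1 (bp x.2 (i0 n j)) < x.1 (bp x.2 (i1 n j))
      rw [bp_i0, bp_i1]
      exact h1
    · intro x hx y hy hxy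
      obtain ⟨hx1, -⟩ := Finset.mem_product.mp (Finset.mem_coe.mp hx)
      obtain ⟨hy1, -⟩ := Finset.mem_product.mp (Finset.mem_coe.mp hy)
      have hs₁ : StrictMono (fun j => x.1 (i0 n j)) :=
        fun a b h => ((mem_pfM_iff x.1).mp hx1).2 a b h
      have hs₂ : StrictMono (fun j => y.1 (i0 n j)) :=
        fun a b h => ((mem_pfM_iff y.1).mp hy1).2 a b h
      have happ : ∀ j, x.1 (i0 n (x.2 j)) = y.1 (i0 n (y.2 j)) := by
        intro j
        have h := congrArg (fun σ : Equiv.Perm (Fin (2 * n)) => σ (i0 n j)) hxy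
        simp only [Equiv.Perm.mul_apply] at h
        rwa [bp_i0, bp_i0] at h
      have hcomp : (fun j => x.1 (i0 n j)) ∘ ⇑x.2 = (fun j => y.1 (i0 n j)) ∘ ⇑y.2 :=
        funext happ
      have hr : Set.range (fun j => x.1 (i0 n j)) = Set.range (fun j => y.1 (i0 n j)) := by
        rw [← x.2.surjective.range_comp (fun j => x.1 (i0 n j)),
          ← y.2.surjective.range_comp (fun j => y.1 (i0 n j)), hcomp]
      have hf : (fun j => x.1 (i0 n j)) = (fun j => y.1 (i0 n j)) :=
        by haveI : WellFoundedLT (Fin n) := inferInstance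
           exact (hs₁.range_inj hs₂).mp hr
      have hτ : x.2 = y.2 := by
        refine Equiv.ext fun j => hs₂.injective ?_
        exact (congrFun hf (x.2 j)).symm.trans (happ j)
      have hxy' : x.1 * bp x.2 = y.1 * bp y.2 := hxy
      have hπ : x.1 = y.1 := by
        rw [hτ] at hxy'
        exact mul_right_cancel hxy'
      exact Prod.ext hπ hτ
    · intro σ hσ
      have hσ' := (Finset.mem_filter.mp (Finset.mem_coe.mp hσ)).2
      set s0 : Fin n → Fin (2 * n) := fun j => σ (i0 n j) with hs0
      set τ₀ := Tuple.sort s0 with hτ₀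
      have hmono : Monotone (s0 ∘ ⇑τ₀) := Tuple.monotone_sort s0
      have hinj : Function.Injective (s0 ∘ ⇑τ₀) :=
        (σ.injective.comp i0_injective).comp τ₀.injective
      have hsm : StrictMono (s0 ∘ ⇑τ₀) := hmono.strictMono_of_injective hinj
      refine ⟨(σ * bp τ₀, τ₀⁻¹), ?_, ?_⟩
      · rw [Finset.mem_coe, Finset.mem_product]
        refine ⟨?_, Finset.mem_univ _⟩
        rw [mem_pfM_iff]
        constructor
        · intro j
          show σ (bp τ₀ (i0 n j)) < σ (bp τ₀ (i1 n j))
          rw [bp_i0, bp_i1]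
          exact hσ' (τ₀ j)
        · intro j k hjk
          show σ (bp τ₀ (i0 n j)) < σ (bp τ₀ (i0 n k))
          rw [bp_i0, bp_i0]
          exact hsm hjk
      · show (σ * bp τ₀) * bp τ₀⁻¹ = σ
        rw [mul_assoc, bp_mul, mul_inv_cancel, bp_one, mul_one]
    · intro x hx
      rfl
  rw [← hbij]
  calc ∑ x ∈ (pfMatchings n) ×ˢ (Finset.univ : Finset (Equiv.Perm (Fin n))),
        cf n M (x.1 * bp x.2) • topE R n
      = ∑ x ∈ (pfMatchings n) ×ˢ (Finset.univ : Finset (Equiv.Perm (Fin n))),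
        cf n M x.1 • topE R n :=
        Finset.sum_congr rfl fun x _ => by rw [cf_mul_bp]
    _ = ∑ π ∈ pfMatchings n, ∑ _τ : Equiv.Perm (Fin n), cf n M π • topE R n :=
        by rw [Finset.sum_product]
    _ = ∑ π ∈ pfMatchings n, n.factorial • (cf n M π • topE R n) := by
        refine Finset.sum_congr rfl fun π _ => ?_
        rw [Finset.sum_const, Finset.card_univ, Fintype.card_perm, Fintype.card_fin]
    _ = ∑ π ∈ pfMatchings n, ((n.factorial : R) * cf n M π) • topE R n := by
        refine Finset.sum_congr rfl fun π _ => ?_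
        rw [← smul_assoc, nsmul_eq_mul]
    _ = ((n.factorial : R) * pfaffian M) • topE R n := by
        rw [← Finset.sum_smul, ← Finset.mul_sum, pfaffian_eq]

end PfWedge


/-- For an antisymmetric `M`, the 2-form
`ω = (1/2)·Σ_{μ,ν} M_{μν} e_μ ∧ e_ν = Σ_{μ<ν} M_{μν} e_μ ∧ e_ν` satisfies
`ω^{∧n} = n! · pf(M) · e₁ ∧ ⋯ ∧ e_{2n}`. -/
theorem wedge_pow_eq_pfaffian {R : Type*} [CommRing R] (n : ℕ)
    (M : Matrix (Fin (2 * n)) (Fin (2 * n)) R) (hM : Mᵀ = -M) :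
    (∑ μ : Fin (2 * n), ∑ ν : Fin (2 * n),
          if μ < ν then
            M μ ν •
              (ExteriorAlgebra.ι R (Pi.single μ (1 : R) : Fin (2 * n) → R) *
                ExteriorAlgebra.ι R (Pi.single ν (1 : R) : Fin (2 * n) → R))
          else 0) ^ n
      = ((n.factorial : R) * pfaffian M) •
          ((List.finRange (2 * n)).map fun μ =>
            ExteriorAlgebra.ι R (Pi.single μ (1 : R) : Fin (2 * n) → R)).prod := by
  classical
  have hω : (∑ μ : Fin (2 * n), ∑ ν : Fin (2 * n),
          if μ < ν then
            M μ ν •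
              (ExteriorAlgebra.ι R (Pi.single μ (1 : R) : Fin (2 * n) → R) *
                ExteriorAlgebra.ι R (Pi.single ν (1 : R) : Fin (2 * n) → R))
          else 0)
      = ∑ p : Fin (2 * n) × Fin (2 * n), PfWedge.tf n M p := by
    rw [Fintype.sum_prod_type (f := fun p : Fin (2 * n) × Fin (2 * n) => PfWedge.tf n M p)]
    rfl
  rw [hω]
  have hpow : (∑ p : Fin (2 * n) × Fin (2 * n), PfWedge.tf n M p) ^ n
      = ∑ d : Fin n → Fin (2 * n) × Fin (2 * n),
          (List.ofFn fun i => PfWedge.tf n M (d i)).prod := by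
    calc (∑ p : Fin (2 * n) × Fin (2 * n), PfWedge.tf n M p) ^ n
        = (List.ofFn fun _ : Fin n =>
            ∑ p : Fin (2 * n) × Fin (2 * n), PfWedge.tf n M p).prod := by
          rw [List.ofFn_const, List.prod_replicate]
      _ = MultilinearMap.mkPiAlgebraFin R n _
            (fun _ => ∑ p : Fin (2 * n) × Fin (2 * n), PfWedge.tf n M p) :=
          (MultilinearMap.mkPiAlgebraFin_apply _).symm
      _ = ∑ d : Fin n → Fin (2 * n) × Fin (2 * n),
            MultilinearMap.mkPiAlgebraFin R n _ (fun i => PfWedge.tf n M (d i)) :=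
          MultilinearMap.map_sum _ (fun _ p => PfWedge.tf n M p)
      _ = ∑ d : Fin n → Fin (2 * n) × Fin (2 * n),
            (List.ofFn fun i => PfWedge.tf n M (d i)).prod := by
          simp only [MultilinearMap.mkPiAlgebraFin_apply]
  rw [hpow, PfWedge.sum_to_Q M, PfWedge.sum_Q_val M]
  congr 1
  rw [PfWedge.topE, ExteriorAlgebra.ιMulti_apply, List.ofFn_eq_map]
  rfl
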